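/- Let x̄ ∈ (0,1) be an interior point that is not an equilibrium of the uncontrolled replicator equation, i.e., (a+d−b−c)·x̄ + b − d ≠ 0. Let φ : ℝ → ℝ be continuously differentiable, let (γ₁, γ₂) be any of (1,0), (0,1), (−1,0), (0,−1), and let (x, g) be a solution of the controlled replicator equation with x(0) ∈ (0,1) and g(0) > 0. If g(t) → 0 as t → ∞, then x(t) does not converge to x̄ as t → ∞. -/

import Mathlib

/-- `(x, g)` is a solution of the controlled replicator equation
`ẋ = x(1−x)((a+d−b−c)x + b − d + γ₁ g x + γ₂ g (1−x))`, `ġ = φ(x) g` on `[0,∞)`. -/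
def IsControlledSolution (a b c d γ₁ γ₂ : ℝ) (φ : ℝ → ℝ) (x g : ℝ → ℝ) : Prop :=
  ∀ t : ℝ, 0 ≤ t →
    HasDerivAt x
      (x t * (1 - x t) *
        ((a + d - b - c) * x t + (b - d) + γ₁ * g t * x t + γ₂ * g t * (1 - x t))) t ∧
    HasDerivAt g (φ (x t) * g t) t

/-- If a function has derivative at least `k > 0` on `[T, ∞)`, it cannot tend to a finite
limit at infinity. -/
lemma aux_no_limit (x f : ℝ → ℝ) (T k L : ℝ) (hk : 0 < k)
    (hd : ∀ t, T ≤ t → HasDerivAt x (f t) t) (hf : ∀ t, T ≤ t → k ≤ f t)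
    (hx : Filter.Tendsto x Filter.atTop (nhds L)) : False := by
  -- y t = x t - k * t is monotone on [T, ∞)
  have hmono : MonotoneOn (fun t => x t - k * t) (Set.Ici T) := by
    apply monotoneOn_of_hasDerivWithinAt_nonneg (convex_Ici T) (f' := fun t => f t - k)
    · intro t ht
      exact ((hd t ht).sub ((hasDerivAt_id t).const_mul k)).continuousAt.continuousWithinAt
    · intro t ht
      rw [interior_Ici] at ht
      exact (((hd t ht.le).sub ((hasDerivAt_id t).const_mul k)).hasDerivWithinAt).congr_deriv
        (by ring)
    · intro t ht
      rw [interior_Ici] at ht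
      linarith [hf t ht.le]
  -- hence x t ≥ x T + k (t - T) for t ≥ T
  have hlow : ∀ t, T ≤ t → x T + k * (t - T) ≤ x t := by
    intro t ht
    have := hmono (Set.self_mem_Ici) (Set.mem_Ici.mpr ht) ht
    simp only at this
    linarith
  -- but x is eventually ≤ L + 1
  have hub : ∀ᶠ t in Filter.atTop, x t ≤ L + 1 := by
    filter_upwards [hx.eventually (eventually_le_nhds (by linarith : L < L + 1))] with t h
    exact h
  have hinf : Filter.Tendsto (fun t => x T + k * (t - T)) Filter.atTop Filter.atTop := by
    apply Filter.tendsto_atTop_add_const_left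
    exact (Filter.tendsto_atTop_add_const_right _ (-T) Filter.tendsto_id).const_mul_atTop hk
  have := ((hinf.eventually_gt_atTop (L + 1)).and (hub.and (Filter.eventually_ge_atTop T))).exists
  obtain ⟨t, h1, h2, h3⟩ := this
  linarith [hlow t h3]

/-- If `xbar ∈ (0,1)` is not an equilibrium of the uncontrolled replicator equation, then
no adaptive-gain controller whose gain vanishes asymptotically can steer the state
to `xbar`. -/
theorem no_vanishing_gain_setpoint (a b c d γ₁ γ₂ xbar : ℝ)
    (hxbar : xbar ∈ Set.Ioo (0 : ℝ) 1) (hne : (a + d - b - c) * xbar + (b - d) ≠ 0)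
    (φ : ℝ → ℝ) (hφ : ContDiff ℝ 1 φ)
    (hγ : (γ₁, γ₂) = (1, 0) ∨ (γ₁, γ₂) = (0, 1) ∨ (γ₁, γ₂) = (-1, 0) ∨ (γ₁, γ₂) = (0, -1))
    (x g : ℝ → ℝ) (hsol : IsControlledSolution a b c d γ₁ γ₂ φ x g)
    (hx0 : x 0 ∈ Set.Ioo (0 : ℝ) 1) (hg0 : 0 < g 0)
    (hgain : Filter.Tendsto g Filter.atTop (nhds 0)) :
    ¬ Filter.Tendsto x Filter.atTop (nhds xbar) := by
  intro hx
  set v : ℝ → ℝ := fun t =>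
    x t * (1 - x t) *
      ((a + d - b - c) * x t + (b - d) + γ₁ * g t * x t + γ₂ * g t * (1 - x t)) with hv
  set c0 : ℝ := xbar * (1 - xbar) * ((a + d - b - c) * xbar + (b - d)) with hc0
  have hc0ne : c0 ≠ 0 := by
    apply mul_ne_zero (mul_ne_zero (ne_of_gt hxbar.1) (by linarith [hxbar.2])) hne
  have hvlim : Filter.Tendsto v Filter.atTop (nhds c0) := by
    have : Filter.Tendsto (fun t => (x t, g t)) Filter.atTop (nhds (xbar, (0 : ℝ))) :=
      hx.prodMk_nhds hgain
    have hcont : Continuous (fun p : ℝ × ℝ =>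
        p.1 * (1 - p.1) *
          ((a + d - b - c) * p.1 + (b - d) + γ₁ * p.2 * p.1 + γ₂ * p.2 * (1 - p.1))) := by
      continuity
    have := (hcont.tendsto (xbar, (0 : ℝ))).comp this
    simpa [hv, hc0, Function.comp_def] using this
  rcases hc0ne.lt_or_gt with hneg | hpos
  · -- c0 < 0 : apply aux to -x
    have h := hvlim.eventually (eventually_le_nhds (by linarith : c0 < c0 / 2))
    obtain ⟨T, hT⟩ := (h.and (Filter.eventually_ge_atTop (0 : ℝ))).exists_forall_of_atTop
    exact aux_no_limit (fun t => -x t) (fun t => -v t) T (-(c0 / 2)) (-xbar)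
      (by linarith)
      (fun t ht => ((hsol t (hT t ht).2).1.neg))
      (fun t ht => by linarith [(hT t ht).1])
      hx.neg
  · -- c0 > 0
    have h := hvlim.eventually (eventually_ge_nhds (by linarith : c0 / 2 < c0))
    obtain ⟨T, hT⟩ := (h.and (Filter.eventually_ge_atTop (0 : ℝ))).exists_forall_of_atTop
    exact aux_no_limit x v T (c0 / 2) xbar (by linarith)
      (fun t ht => (hsol t (hT t ht).2).1)
      (fun t ht => (hT t ht).1)
      hx
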